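/- Let (N,v) be a TU game with veto player a and empty core. Then the least core value ε* satisfies 2ε̃ < ε* ≤ ε̃, where ε̃ = (v(N) − max{ v(S) : S proper, a ∈ S })/2 < 0. -/
import Mathlib


open Finset

/-- The strong ε-core of a TU game. -/
def epsCore {ι : Type*} [Fintype ι] [DecidableEq ι] (v : Finset ι → ℝ) (ε : ℝ) :
    Set (ι → ℝ) :=
  {x | (∑ i, x i) = v Finset.univ ∧
    ∀ S : Finset ι, S.Nonempty → S ≠ Finset.univ → v S + ε ≤ ∑ i ∈ S, x i}

/-- The least core value: the largest ε for which the strong ε-core is nonempty. -/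
noncomputable def lcv {ι : Type*} [Fintype ι] [DecidableEq ι] (v : Finset ι → ℝ) : ℝ :=
  sSup {ε : ℝ | (epsCore v ε).Nonempty}

/-- The set of proper coalitions containing the player `a`. -/
def Pa {ι : Type*} [Fintype ι] [DecidableEq ι] (a : ι) : Finset (Finset ι) :=
  Finset.univ.filter (fun S => a ∈ S ∧ S ≠ Finset.univ)

lemma sum_ite_mem {ι : Type*} [DecidableEq ι] (a : ι) (c t : ℝ) (S : Finset ι)
    (ha : a ∈ S) :
    ∑ i ∈ S, (if i = a then c else t) = c + ((S.card : ℝ) - 1) * t := by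
  rw [← Finset.add_sum_erase S _ ha, if_pos rfl]
  have h1 : ∑ i ∈ S.erase a, (if i = a then c else t) = ∑ _i ∈ S.erase a, t :=
    Finset.sum_congr rfl (fun i hi => if_neg (Finset.ne_of_mem_erase hi))
  rw [h1, Finset.sum_const, nsmul_eq_mul, Finset.card_erase_of_mem ha,
    Nat.cast_sub (Finset.one_le_card.mpr ⟨a, ha⟩), Nat.cast_one]

lemma sum_ite_not_mem {ι : Type*} [DecidableEq ι] (a : ι) (c t : ℝ) (S : Finset ι)
    (ha : a ∉ S) :
    ∑ i ∈ S, (if i = a then c else t) = (S.card : ℝ) * t := by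
  have h1 : ∑ i ∈ S, (if i = a then c else t) = ∑ _i ∈ S, t :=
    Finset.sum_congr rfl (fun i hi => if_neg (fun h => ha (by rwa [h] at hi)))
  rw [h1, Finset.sum_const, nsmul_eq_mul]

/-- For a veto game with empty core, the least core value `ε*` satisfies
`2ε̃ < ε* ≤ ε̃ < 0`, where `ε̃ = (v(N) − max{ v(S) : S proper, a ∈ S })/2`. -/
theorem stmt7 {ι : Type*} [Fintype ι] [DecidableEq ι] (v : Finset ι → ℝ) (a : ι)
    (hcard : 2 ≤ Fintype.card ι)
    (hempty : v ∅ = 0)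
    (hveto : ∀ S : Finset ι, a ∉ S → v S = 0)
    (hcore : ¬ (epsCore v 0).Nonempty)
    (hPa : (Pa a).Nonempty) :
    (v Finset.univ - (Pa a).sup' hPa v) / 2 < 0 ∧
    2 * ((v Finset.univ - (Pa a).sup' hPa v) / 2) < lcv v ∧
    lcv v ≤ (v Finset.univ - (Pa a).sup' hPa v) / 2 := by
  have hn2 : (2 : ℝ) ≤ (Fintype.card ι : ℝ) := by exact_mod_cast hcard
  set n : ℝ := (Fintype.card ι : ℝ) with hn
  have hnpos : (0 : ℝ) < n := by linarith
  set M := (Pa a).sup' hPa v with hMdef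
  -- Step 1: v univ < M
  have hvM : v Finset.univ < M := by
    by_contra h
    push_neg at h
    apply hcore
    refine ⟨fun i => if i = a then v Finset.univ else 0, ?_, ?_⟩
    · rw [sum_ite_mem a _ _ Finset.univ (Finset.mem_univ a)]; ring
    · intro S hS hSne
      by_cases haS : a ∈ S
      · have hSM : v S ≤ M := Finset.le_sup' v (by simp [Pa, haS, hSne])
        rw [sum_ite_mem a _ _ S haS]
        have : v S ≤ v Finset.univ := le_trans hSM h
        linarith
      · rw [hveto S haS, sum_ite_not_mem a _ _ S haS]
        simp
  set ee := (v Finset.univ - M) / 2 with heedef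
  have hee0 : ee < 0 := by
    rw [heedef]; linarith
  -- Upper bound: every ε with nonempty ε-core satisfies ε ≤ ee
  have hub : ∀ ε ∈ {ε : ℝ | (epsCore v ε).Nonempty}, ε ≤ ee := by
    rintro ε ⟨x, hx1, hx2⟩
    obtain ⟨S, hSmem, hSeq⟩ := Finset.exists_mem_eq_sup' hPa v
    rw [Pa, Finset.mem_filter] at hSmem
    obtain ⟨-, haS, hSne⟩ := hSmem
    have hS1 := hx2 S ⟨a, haS⟩ hSne
    have hcne : (Finset.univ \ S).Nonempty := by
      rw [Finset.sdiff_nonempty]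
      intro hsub
      exact hSne (Finset.univ_subset_iff.mp hsub)
    have hcnu : Finset.univ \ S ≠ Finset.univ := by
      intro h
      have h1 : a ∉ Finset.univ \ S := by simp [haS]
      rw [h] at h1
      exact h1 (Finset.mem_univ a)
    have hS2 := hx2 _ hcne hcnu
    rw [hveto _ (by simp [haS])] at hS2
    have hsum : ∑ i ∈ Finset.univ \ S, x i + ∑ i ∈ S, x i = v Finset.univ := by
      rw [Finset.sum_sdiff (Finset.subset_univ S)]; exact hx1
    rw [← hSeq] at hS1
    rw [heedef]
    linarith
  -- Lower bound: explicit allocation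
  set t : ℝ := 2 * ee / n with htdef
  have hnt : n * t = 2 * ee := by
    rw [htdef]; field_simp
  have ht0 : t < 0 := div_neg_of_neg_of_pos (by linarith) hnpos
  set ε₀ : ℝ := (n - 1) * t with he0def
  have hmem : ε₀ ∈ {ε : ℝ | (epsCore v ε).Nonempty} := by
    refine ⟨fun i => if i = a then v Finset.univ - (n - 1) * t else t, ?_, ?_⟩
    · rw [sum_ite_mem a _ _ Finset.univ (Finset.mem_univ a), Finset.card_univ, ← hn]
      ring
    · intro S hS hSne
      have hclt : S.card < Fintype.card ι := by
        rw [← Finset.card_univ]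
        exact Finset.card_lt_card (Finset.ssubset_univ_iff.mpr hSne)
      have hcle : (S.card : ℝ) ≤ n - 1 := by
        rw [hn]
        have : (S.card : ℝ) + 1 ≤ (Fintype.card ι : ℝ) := by exact_mod_cast hclt
        linarith
      by_cases haS : a ∈ S
      · have hSM : v S ≤ M := Finset.le_sup' v (by simp [Pa, haS, hSne])
        rw [sum_ite_mem a _ _ S haS]
        have hkey : (0 : ℝ) ≤ (n - (S.card : ℝ) - 1) * (-t) :=
          mul_nonneg (by linarith) (by linarith)
        have hvu : v Finset.univ = M + 2 * ee := by rw [heedef]; ring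
        nlinarith [hkey]
      · rw [hveto S haS, sum_ite_not_mem a _ _ S haS]
        have hkey : (0 : ℝ) ≤ (n - 1 - (S.card : ℝ)) * (-t) :=
          mul_nonneg (by linarith) (by linarith)
        nlinarith [hkey]
  have hbdd : BddAbove {ε : ℝ | (epsCore v ε).Nonempty} := ⟨ee, hub⟩
  have hlcv_ge : ε₀ ≤ lcv v := le_csSup hbdd hmem
  have hlcv_le : lcv v ≤ ee := csSup_le ⟨ε₀, hmem⟩ hub
  refine ⟨hee0, ?_, hlcv_le⟩
  have h2e : 2 * ee < ε₀ := by
    have : 2 * ee = ε₀ + t := by rw [he0def, ← hnt]; ring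
    linarith
  linarith
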